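/- Let p be a prime and let i, j, r be positive integers with i < r and j < r such that gcd(r, i) divides j. Then there exist positive integers a and b such that p^{r-j}(p^j − 1) + a·p^{r-i}(p^i − 1) = b(p^r − 1). -/

import Mathlib

lemma exists_tm (r u v : ℕ) (hr : 0 < r) (hu : 0 < u) (hd : Nat.gcd r u ∣ v) :
    ∃ t m : ℕ, 0 < t ∧ u * t = v + m * r := by
  obtain ⟨c, hc⟩ := hd
  have hbez := Nat.gcd_eq_gcd_ab r u
  set A := Nat.gcdA r u with hA
  set B := Nat.gcdB r u with hB
  set N : ℤ := |B * c| + |A * c| + 1 with hN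
  have habs1 : B * c ≤ |B * c| := le_abs_self _
  have habs2 : -(|B * c|) ≤ B * c := neg_abs_le _
  have habs3 : A * c ≤ |A * c| := le_abs_self _
  have habs4 : -(|A * c|) ≤ A * c := neg_abs_le _
  have hrN : (N : ℤ) ≤ r * N := by
    have : (1:ℤ) ≤ r := by exact_mod_cast hr
    nlinarith [abs_nonneg (B*c), abs_nonneg (A*c)]
  have huN : (N : ℤ) ≤ u * N := by
    have : (1:ℤ) ≤ u := by exact_mod_cast hu
    nlinarith [abs_nonneg (B*c), abs_nonneg (A*c)]
  have h1 : 0 < B * c + r * N := by simp only [hN] at hrN ⊢; linarith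
  have h2 : 0 ≤ u * N - A * c := by simp only [hN] at huN ⊢; linarith
  have key : (u : ℤ) * (B * c + r * N) = v + (u * N - A * c) * r := by
    have hv : (v : ℤ) = (r * A + u * B) * c := by
      rw [← hbez]; exact_mod_cast hc
    ring_nf
    ring_nf at hv
    linarith
  refine ⟨(B * c + r * N).toNat, (u * N - A * c).toNat, ?_, ?_⟩
  · have h1' : (0:ℤ) < ((B * c + r * N).toNat : ℤ) := by
      rw [Int.toNat_of_nonneg h1.le]; exact h1
    exact_mod_cast h1'
  · have := Int.toNat_of_nonneg h1.le
    have := Int.toNat_of_nonneg h2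
    zify
    rw [Int.toNat_of_nonneg h1.le, Int.toNat_of_nonneg h2]
    linarith [key]

theorem statement10 (p : ℕ) (hp : p.Prime) (i j r : ℕ)
    (hi : 0 < i) (hj : 0 < j) (hir : i < r) (hjr : j < r)
    (hd : Nat.gcd r i ∣ j) :
    ∃ a b : ℕ, 0 < a ∧ 0 < b ∧
      p ^ (r - j) * (p ^ j - 1) + a * (p ^ (r - i) * (p ^ i - 1)) = b * (p ^ r - 1) := by
  have hp2 : 2 ≤ p := hp.two_le
  have hp1 : 1 < p := hp2
  set u := r - i with hu_def
  set v := r - j with hv_def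
  have hu : 0 < u := by omega
  have hv : 0 < v := by omega
  have hur : u < r := by omega
  have hd2 : Nat.gcd r u ∣ v := by
    have hg : Nat.gcd r u = Nat.gcd r i := by
      rw [hu_def, Nat.gcd_self_sub_right hir.le]
    rw [hg]
    exact Nat.dvd_sub (Nat.gcd_dvd_left r i) hd
  obtain ⟨t, m, ht, htm⟩ := exists_tm r u v (by omega) hu hd2
  set S : ℕ := ∑ k ∈ Finset.range t, p ^ (u * k) with hS_def
  set T : ℕ := ∑ l ∈ Finset.range m, p ^ (r * l) with hT_def
  have hS1 : 0 < S := by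
    apply Finset.sum_pos (fun k _ => Nat.pow_pos (by omega)) ⟨0, Finset.mem_range.mpr ht⟩
  -- basic inequalities
  have hpj : 1 ≤ p ^ j := Nat.one_le_pow _ _ (by omega)
  have hpi : 1 ≤ p ^ i := Nat.one_le_pow _ _ (by omega)
  have hpr2 : 2 ≤ p ^ r := by
    calc 2 = 2^1 := rfl
    _ ≤ p ^ r := Nat.pow_le_pow_left hp2 1 |>.trans (Nat.pow_le_pow_right (by omega) (by omega))
  have hpur : p ^ u + 1 ≤ p ^ r := Nat.pow_lt_pow_right hp1 hur
  have hpr1 : 1 ≤ p ^ r := le_trans one_le_two hpr2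
  have hpur' : p ^ u ≤ p ^ r - 1 := by
    have := Nat.le_sub_one_of_lt (Nat.pow_lt_pow_right hp1 hur)
    exact this
  have hpr4 : 2 < p ^ r := by
    calc 2 < 2 ^ 2 := by norm_num
    _ ≤ p ^ 2 := Nat.pow_le_pow_left hp2 2
    _ ≤ p ^ r := Nat.pow_le_pow_right (by omega) (by omega)
  refine ⟨S * (p ^ r - 2), 1 + S * (p ^ r - 1 - p ^ u) + p ^ v * T, ?_, by positivity, ?_⟩
  · exact Nat.mul_pos hS1 (Nat.sub_pos_of_lt hpr4)
  -- key identity over ℤ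
  have hSZ : (S : ℤ) * ((p:ℤ) ^ u - 1) = (p:ℤ) ^ (u * t) - 1 := by
    have h := geom_sum_mul ((p:ℤ) ^ u) t
    have hcast : (S:ℤ) = ∑ k ∈ Finset.range t, ((p:ℤ)^u)^k := by
      push_cast [hS_def]
      exact Finset.sum_congr rfl fun k _ => by rw [← pow_mul]
    rw [hcast, h, ← pow_mul]
  have hTZ : (T : ℤ) * ((p:ℤ) ^ r - 1) = (p:ℤ) ^ (r * m) - 1 := by
    have h := geom_sum_mul ((p:ℤ) ^ r) m
    have hcast : (T:ℤ) = ∑ k ∈ Finset.range m, ((p:ℤ)^r)^k := by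
      push_cast [hT_def]
      exact Finset.sum_congr rfl fun k _ => by rw [← pow_mul]
    rw [hcast, h, ← pow_mul]
  have e1 : (p:ℤ) ^ (r - j) * (p:ℤ) ^ j = (p:ℤ) ^ r := by
    rw [← pow_add]; congr 1; omega
  have e2 : (p:ℤ) ^ (r - i) * (p:ℤ) ^ i = (p:ℤ) ^ r := by
    rw [← pow_add]; congr 1; omega
  have e3 : (p:ℤ) ^ (u * t) = (p:ℤ) ^ v * (p:ℤ) ^ (r * m) := by
    rw [← pow_add]; congr 1; rw [htm, Nat.mul_comm]
  zify [hpj, hpi, hpr2, hpr1, hpur']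
  rw [e3] at hSZ
  linear_combination e1 + (S:ℤ) * ((p:ℤ)^r - 2) * e2 + hSZ - (p:ℤ)^v * hTZ
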